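/- arXiv:1111.0618 — 3 statements merged into one kernel-verified Lean document; each statement's English description precedes it below -/
import Mathlib

section
/- Let j ≥ 0 be an integer and let w : ℝ² → ℝ be continuously differentiable. Suppose u₀ ∈ P_j satisfies ∫_K (w − u₀) p dx dy = 0 for every p ∈ P_j; suppose for each m ∈ {1,2,3,4} that u_{b,m} is a polynomial of degree ≤ j+1 in the coordinate running along F_m with ∫_{F_m} (w − u_{b,m}) p ds = 0 for every univariate polynomial p of degree ≤ j+1; and suppose G ∈ BDM_{j+1}(K) satisfies ∫_K G·q dx dy = −∫_K u₀ (div q) dx dy + Σ_{m=1}^{4} ∫_{F_m} u_{b,m} (q·n_m) ds for every q ∈ BDM_{j+1}(K). Then G is the best L² approximation of ∇w from BDM_{j+1}(K): for every q ∈ BDM_{j+1}(K), ∫_K |G − ∇w|² dx dy ≤ ∫_K |q − ∇w|² dx dy. -/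
open MeasureTheory MvPolynomial

noncomputable section

/-- Real polynomials in two variables. -/
abbrev Poly2 := MvPolynomial (Fin 2) ℝ

/-- Evaluate a two-variable polynomial at `(x, y)`. -/
def evalP (p : Poly2) (x y : ℝ) : ℝ := MvPolynomial.eval ![x, y] p

/-- `P_r`: total degree `≤ r`. -/
def memP (r : ℕ) (p : Poly2) : Prop := p.totalDegree ≤ r

/-- The divergence of a polynomial vector field. -/
def divP (q : Poly2 × Poly2) : Poly2 := pderiv 0 q.1 + pderiv 1 q.2

/-- The curl of a scalar polynomial: `curl φ = (−∂φ/∂y, ∂φ/∂x)`. -/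
def curlP (φ : Poly2) : Poly2 × Poly2 := (-(pderiv 1 φ), pderiv 0 φ)

/-- The Brezzi–Douglas–Marini space
`BDM_{j+1}(K) = (P_{j+1})² + span{curl (x^{j+2} y), curl (x y^{j+2})}`. -/
def memBDM (j : ℕ) (q : Poly2 × Poly2) : Prop :=
  ∃ (p₁ p₂ : Poly2) (a b : ℝ), memP (j+1) p₁ ∧ memP (j+1) p₂ ∧
    q.1 = p₁ + a • (curlP (X 0 ^ (j+2) * X 1)).1 + b • (curlP (X 0 * X 1 ^ (j+2))).1 ∧
    q.2 = p₂ + a • (curlP (X 0 ^ (j+2) * X 1)).2 + b • (curlP (X 0 * X 1 ^ (j+2))).2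


lemma evalP_cont (p : Poly2) : Continuous fun z : ℝ × ℝ => evalP p z.1 z.2 := by
  have : Continuous fun z : ℝ × ℝ => (![z.1, z.2] : Fin 2 → ℝ) := by
    refine continuous_pi fun i => ?_
    fin_cases i <;> simp [continuous_fst, continuous_snd]
  exact (MvPolynomial.continuous_eval (p := p)).comp this

lemma totalDegree_pderiv_le (i : Fin 2) (p : Poly2) {n : ℕ} (hp : p.totalDegree ≤ n + 1) :
    (pderiv i p).totalDegree ≤ n := by
  conv_lhs => rw [p.as_sum]
  rw [map_sum]
  refine MvPolynomial.totalDegree_finsetSum_le fun m hm => ?_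
  rw [pderiv_monomial]
  by_cases h : m i = 0
  · simp [h]
  · refine (MvPolynomial.totalDegree_monomial_le _ _).trans ?_
    have h1 : (m - Finsupp.single i 1) + Finsupp.single i 1 = m :=
      tsub_add_cancel_of_le (Finsupp.single_le_iff.mpr (Nat.one_le_iff_ne_zero.mpr h))
    have h2 : ((m - Finsupp.single i 1) + Finsupp.single i 1).sum (fun _ e => e)
        = (m - Finsupp.single i 1).sum (fun _ e => e) + 1 := by
      rw [Finsupp.sum_add_index' (fun _ => rfl) (fun _ _ _ => rfl)]
      simp
    rw [h1] at h2
    have h3 := MvPolynomial.le_totalDegree hm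
    simp only [Function.id_def] at *
    omega

lemma eval_aeval2 (f : Fin 2 → Polynomial ℝ) (t : ℝ) (p : Poly2) :
    (MvPolynomial.aeval f p).eval t = MvPolynomial.eval (fun i => (f i).eval t) p := by
  induction p using MvPolynomial.induction_on with
  | C a => simp
  | add p q hp hq => simp [hp, hq]
  | mul_X p i hp => simp [hp]

lemma natDegree_aeval2_le (f : Fin 2 → Polynomial ℝ) (hf : ∀ i, (f i).natDegree ≤ 1)
    (p : Poly2) : (MvPolynomial.aeval f p).natDegree ≤ p.totalDegree := by
  rw [MvPolynomial.aeval_def, MvPolynomial.eval₂_eq]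
  refine Polynomial.natDegree_sum_le_of_forall_le _ _ fun m hm => ?_
  rw [Polynomial.algebraMap_eq]
  refine (Polynomial.natDegree_C_mul_le _ _).trans ?_
  refine (Polynomial.natDegree_prod_le _ _).trans ?_
  refine le_trans ?_ (MvPolynomial.le_totalDegree hm)
  have : ∀ i ∈ m.support, (f i ^ m i).natDegree ≤ m i := fun i _ =>
    (Polynomial.natDegree_pow_le_of_le _ (hf i)).trans (by omega)
  calc ∑ i ∈ m.support, (f i ^ m i).natDegree ≤ ∑ i ∈ m.support, m i :=
        Finset.sum_le_sum this
    _ = m.sum fun _ e => e := rfl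

lemma derivative_aeval_fst (y : ℝ) (p : Poly2) :
    Polynomial.derivative (MvPolynomial.aeval ![Polynomial.X, Polynomial.C y] p)
      = MvPolynomial.aeval ![Polynomial.X, Polynomial.C y] (pderiv 0 p) := by
  induction p using MvPolynomial.induction_on with
  | C a => simp
  | add p q hp hq => simp [hp, hq]
  | mul_X p i hp =>
    fin_cases i <;>
      simp [pderiv_mul, hp, Polynomial.derivative_mul, pderiv_X_self, pderiv_X_of_ne] <;> ring

lemma derivative_aeval_snd (x : ℝ) (p : Poly2) :
    Polynomial.derivative (MvPolynomial.aeval ![Polynomial.C x, Polynomial.X] p)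
      = MvPolynomial.aeval ![Polynomial.C x, Polynomial.X] (pderiv 1 p) := by
  induction p using MvPolynomial.induction_on with
  | C a => simp
  | add p q hp hq => simp [hp, hq]
  | mul_X p i hp =>
    fin_cases i <;>
      simp [pderiv_mul, hp, Polynomial.derivative_mul, pderiv_X_self, pderiv_X_of_ne] <;> ring

lemma eval_aeval_fst (x y : ℝ) (p : Poly2) :
    (MvPolynomial.aeval ![Polynomial.X, Polynomial.C y] p).eval x = evalP p x y := by
  rw [eval_aeval2, evalP]
  have : (fun i => Polynomial.eval x (![Polynomial.X, Polynomial.C y] i)) = ![x, y] := by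
    funext i; fin_cases i <;> simp
  rw [this]

lemma eval_aeval_snd (x y : ℝ) (p : Poly2) :
    (MvPolynomial.aeval ![Polynomial.C x, Polynomial.X] p).eval y = evalP p x y := by
  rw [eval_aeval2, evalP]
  have : (fun i => Polynomial.eval y (![Polynomial.C x, Polynomial.X] i)) = ![x, y] := by
    funext i; fin_cases i <;> simp
  rw [this]

lemma hasDerivAt_evalP_fst (p : Poly2) (y x : ℝ) :
    HasDerivAt (fun t => evalP p t y) (evalP (pderiv 0 p) x y) x := by
  have h := Polynomial.hasDerivAt (MvPolynomial.aeval ![Polynomial.X, Polynomial.C y] p) x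
  rw [derivative_aeval_fst, eval_aeval_fst] at h
  exact h.congr_deriv rfl |>.congr_of_eventuallyEq (Filter.Eventually.of_forall fun t => (eval_aeval_fst t y p).symm)

lemma hasDerivAt_evalP_snd (p : Poly2) (x y : ℝ) :
    HasDerivAt (fun t => evalP p x t) (evalP (pderiv 1 p) x y) y := by
  have h := Polynomial.hasDerivAt (MvPolynomial.aeval ![Polynomial.C x, Polynomial.X] p) y
  rw [derivative_aeval_snd, eval_aeval_snd] at h
  exact h.congr_of_eventuallyEq (Filter.Eventually.of_forall fun t => (eval_aeval_snd x t p).symm)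

section Rect
variable {x₀ x₁ y₀ y₁ : ℝ}

lemma rect_integrableOn {f : ℝ × ℝ → ℝ} (hf : Continuous f) :
    IntegrableOn f (Set.Icc x₀ x₁ ×ˢ Set.Icc y₀ y₁) volume :=
  hf.continuousOn.integrableOn_compact (isCompact_Icc.prod isCompact_Icc)

lemma rect_integral_yx (hx : x₀ ≤ x₁) (hy : y₀ ≤ y₁) {f : ℝ × ℝ → ℝ} (hf : Continuous f) :
    (∫ z in Set.Icc x₀ x₁ ×ˢ Set.Icc y₀ y₁, f z) = ∫ y in y₀..y₁, ∫ x in x₀..x₁, f (x, y) := by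
  have hint := rect_integrableOn (x₀ := x₀) (x₁ := x₁) (y₀ := y₀) (y₁ := y₁) hf
  rw [Measure.volume_eq_prod] at hint ⊢
  rw [← Measure.prod_restrict]
  rw [MeasureTheory.integral_prod_symm _ (by rwa [Measure.prod_restrict])]
  rw [intervalIntegral.integral_of_le hy, ← MeasureTheory.integral_Icc_eq_integral_Ioc]
  refine setIntegral_congr_fun measurableSet_Icc fun y _ => ?_
  rw [intervalIntegral.integral_of_le hx, ← MeasureTheory.integral_Icc_eq_integral_Ioc]

lemma rect_integral_xy (hx : x₀ ≤ x₁) (hy : y₀ ≤ y₁) {f : ℝ × ℝ → ℝ} (hf : Continuous f) :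
    (∫ z in Set.Icc x₀ x₁ ×ˢ Set.Icc y₀ y₁, f z) = ∫ x in x₀..x₁, ∫ y in y₀..y₁, f (x, y) := by
  have hint := rect_integrableOn (x₀ := x₀) (x₁ := x₁) (y₀ := y₀) (y₁ := y₁) hf
  rw [Measure.volume_eq_prod] at hint ⊢
  rw [← Measure.prod_restrict]
  rw [MeasureTheory.integral_prod _ (by rwa [Measure.prod_restrict])]
  rw [intervalIntegral.integral_of_le hx, ← MeasureTheory.integral_Icc_eq_integral_Ioc]
  refine setIntegral_congr_fun measurableSet_Icc fun x _ => ?_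
  rw [intervalIntegral.integral_of_le hy, ← MeasureTheory.integral_Icc_eq_integral_Ioc]

end Rect

section Parts
variable {x₀ x₁ y₀ y₁ : ℝ} {w : ℝ × ℝ → ℝ}

lemma evalP_cont_x (p : Poly2) (c : ℝ) : Continuous fun x : ℝ => evalP p x c := by
  have h : Continuous fun x : ℝ => (![x, c] : Fin 2 → ℝ) := by
    refine continuous_pi fun i => ?_
    fin_cases i <;> simp <;> first | exact continuous_id | exact continuous_const
  exact (MvPolynomial.continuous_eval (p := p)).comp h

lemma evalP_cont_y (p : Poly2) (c : ℝ) : Continuous fun y : ℝ => evalP p c y := by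
  have h : Continuous fun y : ℝ => (![c, y] : Fin 2 → ℝ) := by
    refine continuous_pi fun i => ?_
    fin_cases i <;> simp <;> first | exact continuous_id | exact continuous_const
  exact (MvPolynomial.continuous_eval (p := p)).comp h

lemma cont_g1 (hw : ContDiff ℝ 1 w) : Continuous fun z : ℝ × ℝ => fderiv ℝ w z (1, 0) :=
  (hw.continuous_fderiv one_ne_zero).clm_apply continuous_const

lemma cont_g2 (hw : ContDiff ℝ 1 w) : Continuous fun z : ℝ × ℝ => fderiv ℝ w z (0, 1) :=
  (hw.continuous_fderiv one_ne_zero).clm_apply continuous_const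

lemma hasDerivAt_w_fst (hw : ContDiff ℝ 1 w) (x y : ℝ) :
    HasDerivAt (fun t => w (t, y)) (fderiv ℝ w (x, y) (1, 0)) x := by
  have hd := (hw.differentiable one_ne_zero (x, y)).hasFDerivAt
  have hline : HasDerivAt (fun t : ℝ => (t, y)) ((1 : ℝ), (0 : ℝ)) x :=
    (hasDerivAt_id x).prodMk (hasDerivAt_const x y)
  exact hd.comp_hasDerivAt x hline

lemma hasDerivAt_w_snd (hw : ContDiff ℝ 1 w) (x y : ℝ) :
    HasDerivAt (fun t => w (x, t)) (fderiv ℝ w (x, y) (0, 1)) y := by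
  have hd := (hw.differentiable one_ne_zero (x, y)).hasFDerivAt
  have hline : HasDerivAt (fun t : ℝ => (x, t)) ((0 : ℝ), (1 : ℝ)) y :=
    (hasDerivAt_const y x).prodMk (hasDerivAt_id y)
  exact hd.comp_hasDerivAt y hline

lemma parts_x (hw : ContDiff ℝ 1 w) (hx : x₀ ≤ x₁) (hy : y₀ ≤ y₁) (p : Poly2) :
    (∫ z in Set.Icc x₀ x₁ ×ˢ Set.Icc y₀ y₁,
      (fderiv ℝ w z (1, 0) * evalP p z.1 z.2 + w z * evalP (pderiv 0 p) z.1 z.2))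
    = (∫ y in y₀..y₁, w (x₁, y) * evalP p x₁ y)
      - ∫ y in y₀..y₁, w (x₀, y) * evalP p x₀ y := by
  have hcont : Continuous fun z : ℝ × ℝ =>
      fderiv ℝ w z (1, 0) * evalP p z.1 z.2 + w z * evalP (pderiv 0 p) z.1 z.2 :=
    ((cont_g1 hw).mul (evalP_cont p)).add (hw.continuous.mul (evalP_cont (pderiv 0 p)))
  have hws : ∀ c : ℝ, Continuous fun y : ℝ => w (c, y) := fun c =>
    hw.continuous.comp (continuous_const.prodMk continuous_id)
  have hb : ∀ c : ℝ, IntervalIntegrable (fun y => w (c, y) * evalP p c y) volume y₀ y₁ :=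
    fun c => ((hws c).mul (evalP_cont_y p c)).intervalIntegrable _ _
  rw [rect_integral_yx hx hy hcont, ← intervalIntegral.integral_sub (hb x₁) (hb x₀)]
  refine intervalIntegral.integral_congr fun y _ => ?_
  refine intervalIntegral.integral_eq_sub_of_hasDerivAt
    (f := fun t => w (t, y) * evalP p t y) (fun x _ => ?_) ?_
  · exact (hasDerivAt_w_fst hw x y).mul (hasDerivAt_evalP_fst p y x)
  · have hc : Continuous fun x : ℝ =>
        (fderiv ℝ w (x, y)) (1, 0) * evalP p x y + w (x, y) * evalP (pderiv 0 p) x y := by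
      have h1 : Continuous fun x : ℝ => (fderiv ℝ w (x, y)) (1, 0) :=
        (cont_g1 hw).comp (continuous_id.prodMk continuous_const)
      have h2 : Continuous fun x : ℝ => w (x, y) :=
        hw.continuous.comp (continuous_id.prodMk continuous_const)
      exact (h1.mul (evalP_cont_x p y)).add (h2.mul (evalP_cont_x (pderiv 0 p) y))
    exact hc.intervalIntegrable _ _

lemma parts_y (hw : ContDiff ℝ 1 w) (hx : x₀ ≤ x₁) (hy : y₀ ≤ y₁) (p : Poly2) :
    (∫ z in Set.Icc x₀ x₁ ×ˢ Set.Icc y₀ y₁,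
      (fderiv ℝ w z (0, 1) * evalP p z.1 z.2 + w z * evalP (pderiv 1 p) z.1 z.2))
    = (∫ x in x₀..x₁, w (x, y₁) * evalP p x y₁)
      - ∫ x in x₀..x₁, w (x, y₀) * evalP p x y₀ := by
  have hcont : Continuous fun z : ℝ × ℝ =>
      fderiv ℝ w z (0, 1) * evalP p z.1 z.2 + w z * evalP (pderiv 1 p) z.1 z.2 :=
    ((cont_g2 hw).mul (evalP_cont p)).add (hw.continuous.mul (evalP_cont (pderiv 1 p)))
  have hws : ∀ c : ℝ, Continuous fun x : ℝ => w (x, c) := fun c =>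
    hw.continuous.comp (continuous_id.prodMk continuous_const)
  have hb : ∀ c : ℝ, IntervalIntegrable (fun x => w (x, c) * evalP p x c) volume x₀ x₁ :=
    fun c => ((hws c).mul (evalP_cont_x p c)).intervalIntegrable _ _
  rw [rect_integral_xy hx hy hcont, ← intervalIntegral.integral_sub (hb y₁) (hb y₀)]
  refine intervalIntegral.integral_congr fun x _ => ?_
  refine intervalIntegral.integral_eq_sub_of_hasDerivAt
    (f := fun t => w (x, t) * evalP p x t) (fun y _ => ?_) ?_
  · exact (hasDerivAt_w_snd hw x y).mul (hasDerivAt_evalP_snd p x y)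
  · have hc : Continuous fun y : ℝ =>
        (fderiv ℝ w (x, y)) (0, 1) * evalP p x y + w (x, y) * evalP (pderiv 1 p) x y := by
      have h1 : Continuous fun y : ℝ => (fderiv ℝ w (x, y)) (0, 1) :=
        (cont_g2 hw).comp (continuous_const.prodMk continuous_id)
      have h2 : Continuous fun y : ℝ => w (x, y) :=
        hw.continuous.comp (continuous_const.prodMk continuous_id)
      exact (h1.mul (evalP_cont_y p x)).add (h2.mul (evalP_cont_y (pderiv 1 p) x))
    exact hc.intervalIntegrable _ _

end Parts


lemma memBDM_sub {j : ℕ} {q q' : Poly2 × Poly2} (h : memBDM j q) (h' : memBDM j q') :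
    memBDM j (q.1 - q'.1, q.2 - q'.2) := by
  obtain ⟨p₁, p₂, a, b, hp₁, hp₂, h1, h2⟩ := h
  obtain ⟨p₁', p₂', a', b', hp₁', hp₂', h1', h2'⟩ := h'
  refine ⟨p₁ - p₁', p₂ - p₂', a - a', b - b', ?_, ?_, ?_, ?_⟩
  · exact (MvPolynomial.totalDegree_sub _ _).trans (max_le hp₁ hp₁')
  · exact (MvPolynomial.totalDegree_sub _ _).trans (max_le hp₂ hp₂')
  · simp only [h1, h1', sub_smul]; ring
  · simp only [h2, h2', sub_smul]; ring

lemma pderiv_comm' (i k : Fin 2) (p : Poly2) :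
    pderiv i (pderiv k p) = pderiv k (pderiv i p) := by
  rcases eq_or_ne i k with rfl | h
  · rfl
  induction p using MvPolynomial.induction_on' with
  | monomial m a =>
    simp only [pderiv_monomial]
    have h1 : (m - Finsupp.single k 1 : (Fin 2) →₀ ℕ) i = m i := by
      simp [Finsupp.tsub_apply, Finsupp.single_apply, (Ne.symm h)]
    have h2 : (m - Finsupp.single i 1 : (Fin 2) →₀ ℕ) k = m k := by
      simp [Finsupp.tsub_apply, Finsupp.single_apply, h]
    rw [h1, h2, tsub_right_comm]
    congr 1
    ring
  | add p q hp hq => simp [hp, hq]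

lemma divP_curl (φ₁ φ₂ : Poly2) (a b : ℝ) (p₁ p₂ : Poly2) :
    divP (p₁ + a • (curlP φ₁).1 + b • (curlP φ₂).1, p₂ + a • (curlP φ₁).2 + b • (curlP φ₂).2)
      = pderiv 0 p₁ + pderiv 1 p₂ := by
  simp only [divP, curlP]
  rw [map_add, map_add, map_add, map_add, Derivation.map_smul, Derivation.map_smul,
    Derivation.map_smul, Derivation.map_smul, map_neg, map_neg,
    pderiv_comm' 0 1 φ₁, pderiv_comm' 0 1 φ₂]
  simp only [MvPolynomial.smul_eq_C_mul]
  ring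

lemma divP_memP {j : ℕ} {q : Poly2 × Poly2} (h : memBDM j q) : memP j (divP q) := by
  obtain ⟨p₁, p₂, a, b, hp₁, hp₂, h1, h2⟩ := h
  have e : divP (q.1, q.2) = pderiv 0 p₁ + pderiv 1 p₂ := by
    rw [h1, h2]; exact divP_curl _ _ a b p₁ p₂
  have e' : divP q = pderiv 0 p₁ + pderiv 1 p₂ := e
  rw [memP, e']
  exact (MvPolynomial.totalDegree_add _ _).trans
    (max_le (totalDegree_pderiv_le 0 p₁ hp₁) (totalDegree_pderiv_le 1 p₂ hp₂))

lemma pd11 (j : ℕ) : pderiv (1 : Fin 2) (X 0 ^ (j+2) * X 1 : Poly2) = X 0 ^ (j+2) := by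
  simp [pderiv_mul, pderiv_pow, pderiv_X_self, pderiv_X_of_ne (show (0:Fin 2) ≠ 1 by decide)]

lemma pd12 (j : ℕ) : pderiv (1 : Fin 2) (X 0 * X 1 ^ (j+2) : Poly2)
    = ((j : Poly2) + 2) * X 0 * X 1 ^ (j+1) := by
  simp [pderiv_mul, pderiv_pow, pderiv_X_self, pderiv_X_of_ne (show (0:Fin 2) ≠ 1 by decide)]
  ring

lemma pd01 (j : ℕ) : pderiv (0 : Fin 2) (X 0 ^ (j+2) * X 1 : Poly2)
    = ((j : Poly2) + 2) * X 0 ^ (j+1) * X 1 := by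
  simp [pderiv_mul, pderiv_pow, pderiv_X_self, pderiv_X_of_ne (show (1:Fin 2) ≠ 0 by decide)]
  ring

lemma pd02 (j : ℕ) : pderiv (0 : Fin 2) (X 0 * X 1 ^ (j+2) : Poly2) = X 1 ^ (j+2) := by
  simp [pderiv_mul, pderiv_pow, pderiv_X_self, pderiv_X_of_ne (show (1:Fin 2) ≠ 0 by decide)]

lemma hf_x (c : ℝ) : ∀ i, ((![Polynomial.C c, Polynomial.X] : Fin 2 → Polynomial ℝ) i).natDegree ≤ 1 := by
  intro i; fin_cases i <;> simp

lemma hf_y (c : ℝ) : ∀ i, ((![Polynomial.X, Polynomial.C c] : Fin 2 → Polynomial ℝ) i).natDegree ≤ 1 := by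
  intro i; fin_cases i <;> simp

lemma edge_deg_x (j : ℕ) {q : Poly2 × Poly2} (h : memBDM j q) (c : ℝ) :
    (MvPolynomial.aeval ![Polynomial.C c, Polynomial.X] q.1).natDegree ≤ j + 1 := by
  obtain ⟨p₁, p₂, a, b, hp₁, hp₂, h1, h2⟩ := h
  rw [h1]
  simp only [curlP, pd11, pd12]
  rw [map_add, map_add, _root_.map_smul, _root_.map_smul]
  refine (Polynomial.natDegree_add_le _ _).trans (max_le ((Polynomial.natDegree_add_le _ _).trans
    (max_le ((natDegree_aeval2_le _ (hf_x c) p₁).trans hp₁) ?_)) ?_)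
  · refine (Polynomial.natDegree_smul_le _ _).trans ?_
    have himg : (MvPolynomial.aeval ![Polynomial.C c, Polynomial.X]
        (-(X 0 ^ (j+2)) : Poly2) : Polynomial ℝ) = -(Polynomial.C c ^ (j+2)) := by
      simp
    rw [himg, Polynomial.natDegree_neg, ← Polynomial.C_pow, Polynomial.natDegree_C]
    omega
  · refine (Polynomial.natDegree_smul_le _ _).trans ?_
    have himg : (MvPolynomial.aeval ![Polynomial.C c, Polynomial.X]
        (-(((j : Poly2) + 2) * X 0 * X 1 ^ (j+1))) : Polynomial ℝ)
        = -(Polynomial.C ((j : ℝ) + 2) * Polynomial.C c * Polynomial.X ^ (j+1)) := by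
      simp [map_ofNat]
    rw [himg, Polynomial.natDegree_neg]
    refine Polynomial.natDegree_mul_le.trans ?_
    refine le_trans (add_le_add_left Polynomial.natDegree_mul_le _) ?_
    simp [Polynomial.natDegree_C, Polynomial.natDegree_X_pow]

lemma edge_deg_y (j : ℕ) {q : Poly2 × Poly2} (h : memBDM j q) (c : ℝ) :
    (MvPolynomial.aeval ![Polynomial.X, Polynomial.C c] q.2).natDegree ≤ j + 1 := by
  obtain ⟨p₁, p₂, a, b, hp₁, hp₂, h1, h2⟩ := h
  rw [h2]
  simp only [curlP, pd01, pd02]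
  rw [map_add, map_add, _root_.map_smul, _root_.map_smul]
  refine (Polynomial.natDegree_add_le _ _).trans (max_le ((Polynomial.natDegree_add_le _ _).trans
    (max_le ((natDegree_aeval2_le _ (hf_y c) p₂).trans hp₂) ?_)) ?_)
  · refine (Polynomial.natDegree_smul_le _ _).trans ?_
    have himg : (MvPolynomial.aeval ![Polynomial.X, Polynomial.C c]
        ((((j : Poly2) + 2) * X 0 ^ (j+1) * X 1)) : Polynomial ℝ)
        = Polynomial.C ((j : ℝ) + 2) * Polynomial.X ^ (j+1) * Polynomial.C c := by
      simp [map_ofNat]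
    rw [himg]
    refine Polynomial.natDegree_mul_le.trans ?_
    refine le_trans (add_le_add_left Polynomial.natDegree_mul_le _) ?_
    simp [Polynomial.natDegree_C, Polynomial.natDegree_X_pow]
  · refine (Polynomial.natDegree_smul_le _ _).trans ?_
    have himg : (MvPolynomial.aeval ![Polynomial.X, Polynomial.C c]
        ((X 1 ^ (j+2)) : Poly2) : Polynomial ℝ) = Polynomial.C c ^ (j+2) := by
      simp
    rw [himg, ← Polynomial.C_pow, Polynomial.natDegree_C]
    omega

section Main
variable {x₀ x₁ y₀ y₁ : ℝ} {w : ℝ × ℝ → ℝ}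

lemma evalP_add (p q : Poly2) (x y : ℝ) : evalP (p + q) x y = evalP p x y + evalP q x y := by
  simp [evalP]

lemma evalP_sub (p q : Poly2) (x y : ℝ) : evalP (p - q) x y = evalP p x y - evalP q x y := by
  simp [evalP]

lemma gradpair (hw : ContDiff ℝ 1 w) (hx : x₀ ≤ x₁) (hy : y₀ ≤ y₁) (q : Poly2 × Poly2) :
    (∫ z in Set.Icc x₀ x₁ ×ˢ Set.Icc y₀ y₁,
      (fderiv ℝ w z (1, 0) * evalP q.1 z.1 z.2 + fderiv ℝ w z (0, 1) * evalP q.2 z.1 z.2))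
    = -(∫ z in Set.Icc x₀ x₁ ×ˢ Set.Icc y₀ y₁, w z * evalP (divP q) z.1 z.2)
      + ((∫ y in y₀..y₁, w (x₀, y) * (-(evalP q.1 x₀ y)))
        + (∫ y in y₀..y₁, w (x₁, y) * evalP q.1 x₁ y)
        + (∫ x in x₀..x₁, w (x, y₀) * (-(evalP q.2 x y₀)))
        + (∫ x in x₀..x₁, w (x, y₁) * evalP q.2 x y₁)) := by
  have hA := parts_x hw hx hy q.1
  have hB := parts_y hw hx hy q.2
  have i1 : IntegrableOn (fun z : ℝ × ℝ => fderiv ℝ w z (1, 0) * evalP q.1 z.1 z.2)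
      (Set.Icc x₀ x₁ ×ˢ Set.Icc y₀ y₁) volume :=
    rect_integrableOn ((cont_g1 hw).mul (evalP_cont q.1))
  have i2 : IntegrableOn (fun z : ℝ × ℝ => fderiv ℝ w z (0, 1) * evalP q.2 z.1 z.2)
      (Set.Icc x₀ x₁ ×ˢ Set.Icc y₀ y₁) volume :=
    rect_integrableOn ((cont_g2 hw).mul (evalP_cont q.2))
  have i3 : IntegrableOn (fun z : ℝ × ℝ => w z * evalP (pderiv 0 q.1) z.1 z.2)
      (Set.Icc x₀ x₁ ×ˢ Set.Icc y₀ y₁) volume :=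
    rect_integrableOn (hw.continuous.mul (evalP_cont _))
  have i4 : IntegrableOn (fun z : ℝ × ℝ => w z * evalP (pderiv 1 q.2) z.1 z.2)
      (Set.Icc x₀ x₁ ×ˢ Set.Icc y₀ y₁) volume :=
    rect_integrableOn (hw.continuous.mul (evalP_cont _))
  have E1 : (∫ z in Set.Icc x₀ x₁ ×ˢ Set.Icc y₀ y₁,
      (fderiv ℝ w z (1, 0) * evalP q.1 z.1 z.2 + w z * evalP (pderiv 0 q.1) z.1 z.2))
      = (∫ z in Set.Icc x₀ x₁ ×ˢ Set.Icc y₀ y₁, fderiv ℝ w z (1, 0) * evalP q.1 z.1 z.2)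
        + ∫ z in Set.Icc x₀ x₁ ×ˢ Set.Icc y₀ y₁, w z * evalP (pderiv 0 q.1) z.1 z.2 :=
    integral_add i1 i3
  have E2 : (∫ z in Set.Icc x₀ x₁ ×ˢ Set.Icc y₀ y₁,
      (fderiv ℝ w z (0, 1) * evalP q.2 z.1 z.2 + w z * evalP (pderiv 1 q.2) z.1 z.2))
      = (∫ z in Set.Icc x₀ x₁ ×ˢ Set.Icc y₀ y₁, fderiv ℝ w z (0, 1) * evalP q.2 z.1 z.2)
        + ∫ z in Set.Icc x₀ x₁ ×ˢ Set.Icc y₀ y₁, w z * evalP (pderiv 1 q.2) z.1 z.2 :=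
    integral_add i2 i4
  have E0 : (∫ z in Set.Icc x₀ x₁ ×ˢ Set.Icc y₀ y₁,
      (fderiv ℝ w z (1, 0) * evalP q.1 z.1 z.2 + fderiv ℝ w z (0, 1) * evalP q.2 z.1 z.2))
      = (∫ z in Set.Icc x₀ x₁ ×ˢ Set.Icc y₀ y₁, fderiv ℝ w z (1, 0) * evalP q.1 z.1 z.2)
        + ∫ z in Set.Icc x₀ x₁ ×ˢ Set.Icc y₀ y₁, fderiv ℝ w z (0, 1) * evalP q.2 z.1 z.2 :=
    integral_add i1 i2
  have E3 : (∫ z in Set.Icc x₀ x₁ ×ˢ Set.Icc y₀ y₁, w z * evalP (divP q) z.1 z.2)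
      = (∫ z in Set.Icc x₀ x₁ ×ˢ Set.Icc y₀ y₁, w z * evalP (pderiv 0 q.1) z.1 z.2)
        + ∫ z in Set.Icc x₀ x₁ ×ˢ Set.Icc y₀ y₁, w z * evalP (pderiv 1 q.2) z.1 z.2 := by
    rw [← integral_add i3 i4]
    refine setIntegral_congr_fun (measurableSet_Icc.prod measurableSet_Icc) fun z _ => ?_
    rw [divP, evalP_add]; ring
  have N1 : (∫ y in y₀..y₁, w (x₀, y) * (-(evalP q.1 x₀ y)))
      = -(∫ y in y₀..y₁, w (x₀, y) * evalP q.1 x₀ y) := by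
    rw [← intervalIntegral.integral_neg]
    refine intervalIntegral.integral_congr fun y _ => ?_
    ring
  have N2 : (∫ x in x₀..x₁, w (x, y₀) * (-(evalP q.2 x y₀)))
      = -(∫ x in x₀..x₁, w (x, y₀) * evalP q.2 x y₀) := by
    rw [← intervalIntegral.integral_neg]
    refine intervalIntegral.integral_congr fun x _ => ?_
    ring
  rw [E0, E3, N1, N2]
  linarith [hA, hB, E1, E2]

end Main

lemma edge_swap {a b : ℝ} {f : ℝ → ℝ} (hf : Continuous f) (ub r : Polynomial ℝ)
    (h : (∫ t in a..b, (f t - ub.eval t) * r.eval t) = 0) :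
    (∫ t in a..b, ub.eval t * r.eval t) = ∫ t in a..b, f t * r.eval t := by
  have h2 : (∫ t in a..b, (f t * r.eval t - ub.eval t * r.eval t)) = 0 := by
    rw [← h]
    exact intervalIntegral.integral_congr fun t _ => by ring
  rw [intervalIntegral.integral_sub (f := fun t => f t * r.eval t) (g := fun t => ub.eval t * r.eval t)
    ((hf.mul r.continuous).intervalIntegrable _ _)
    ((ub.continuous.mul r.continuous).intervalIntegrable _ _)] at h2
  linarith

/-- If `u₀` is the `L²(K)`-projection of `w` onto `P_j`, each `u_{b,m}` is the
`L²(F_m)`-projection of `w` onto polynomials of degree `≤ j+1` on the edge `F_m`, and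
`G ∈ BDM_{j+1}(K)` is the associated discrete weak gradient, then `G` is the best `L²(K)` approximation
of `∇w` from `BDM_{j+1}(K)`. -/
theorem statement5 (j : ℕ) (x₀ x₁ y₀ y₁ : ℝ) (hx : x₀ < x₁) (hy : y₀ < y₁)
    (w : ℝ × ℝ → ℝ) (hw : ContDiff ℝ 1 w)
    (u₀ : Poly2) (hu₀ : memP j u₀)
    (hu₀proj : ∀ p : Poly2, memP j p →
      (∫ z in Set.Icc x₀ x₁ ×ˢ Set.Icc y₀ y₁, (w z - evalP u₀ z.1 z.2) * evalP p z.1 z.2) = 0)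
    (ub₁ ub₂ ub₃ ub₄ : Polynomial ℝ)
    (hb₁ : ub₁.natDegree ≤ j + 1) (hb₂ : ub₂.natDegree ≤ j + 1)
    (hb₃ : ub₃.natDegree ≤ j + 1) (hb₄ : ub₄.natDegree ≤ j + 1)
    (hub₁ : ∀ p : Polynomial ℝ, p.natDegree ≤ j + 1 →
      (∫ y in y₀..y₁, (w (x₀, y) - ub₁.eval y) * p.eval y) = 0)
    (hub₂ : ∀ p : Polynomial ℝ, p.natDegree ≤ j + 1 →
      (∫ y in y₀..y₁, (w (x₁, y) - ub₂.eval y) * p.eval y) = 0)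
    (hub₃ : ∀ p : Polynomial ℝ, p.natDegree ≤ j + 1 →
      (∫ x in x₀..x₁, (w (x, y₀) - ub₃.eval x) * p.eval x) = 0)
    (hub₄ : ∀ p : Polynomial ℝ, p.natDegree ≤ j + 1 →
      (∫ x in x₀..x₁, (w (x, y₁) - ub₄.eval x) * p.eval x) = 0)
    (G : Poly2 × Poly2) (hG : memBDM j G)
    (hGdef : ∀ q : Poly2 × Poly2, memBDM j q →
      (∫ z in Set.Icc x₀ x₁ ×ˢ Set.Icc y₀ y₁,
        (evalP G.1 z.1 z.2 * evalP q.1 z.1 z.2 + evalP G.2 z.1 z.2 * evalP q.2 z.1 z.2))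
      = -(∫ z in Set.Icc x₀ x₁ ×ˢ Set.Icc y₀ y₁, evalP u₀ z.1 z.2 * evalP (divP q) z.1 z.2)
        + ((∫ y in y₀..y₁, ub₁.eval y * (-(evalP q.1 x₀ y)))
          + (∫ y in y₀..y₁, ub₂.eval y * evalP q.1 x₁ y)
          + (∫ x in x₀..x₁, ub₃.eval x * (-(evalP q.2 x y₀)))
          + (∫ x in x₀..x₁, ub₄.eval x * evalP q.2 x y₁))) :
    ∀ q : Poly2 × Poly2, memBDM j q →
      (∫ z in Set.Icc x₀ x₁ ×ˢ Set.Icc y₀ y₁,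
        ((evalP G.1 z.1 z.2 - fderiv ℝ w z (1, 0)) ^ 2
          + (evalP G.2 z.1 z.2 - fderiv ℝ w z (0, 1)) ^ 2))
      ≤ ∫ z in Set.Icc x₀ x₁ ×ˢ Set.Icc y₀ y₁,
        ((evalP q.1 z.1 z.2 - fderiv ℝ w z (1, 0)) ^ 2
          + (evalP q.2 z.1 z.2 - fderiv ℝ w z (0, 1)) ^ 2) := by
  have hx' : x₀ ≤ x₁ := hx.le
  have hy' : y₀ ≤ y₁ := hy.le
  have Kmeas : MeasurableSet (Set.Icc x₀ x₁ ×ˢ Set.Icc y₀ y₁) :=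
    measurableSet_Icc.prod measurableSet_Icc
  -- orthogonality
  have ortho : ∀ d : Poly2 × Poly2, memBDM j d →
      (∫ z in Set.Icc x₀ x₁ ×ˢ Set.Icc y₀ y₁,
        ((evalP G.1 z.1 z.2 - fderiv ℝ w z (1, 0)) * evalP d.1 z.1 z.2
          + (evalP G.2 z.1 z.2 - fderiv ℝ w z (0, 1)) * evalP d.2 z.1 z.2)) = 0 := by
    intro d hd
    have S1 := hGdef d hd
    have S2 := gradpair hw hx' hy' d
    -- volume term
    have iw : IntegrableOn (fun z : ℝ × ℝ => w z * evalP (divP d) z.1 z.2)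
        (Set.Icc x₀ x₁ ×ˢ Set.Icc y₀ y₁) volume :=
      rect_integrableOn (hw.continuous.mul (evalP_cont _))
    have iu : IntegrableOn (fun z : ℝ × ℝ => evalP u₀ z.1 z.2 * evalP (divP d) z.1 z.2)
        (Set.Icc x₀ x₁ ×ˢ Set.Icc y₀ y₁) volume :=
      rect_integrableOn ((evalP_cont _).mul (evalP_cont _))
    have S3 : (∫ z in Set.Icc x₀ x₁ ×ˢ Set.Icc y₀ y₁, w z * evalP (divP d) z.1 z.2)
        = ∫ z in Set.Icc x₀ x₁ ×ˢ Set.Icc y₀ y₁, evalP u₀ z.1 z.2 * evalP (divP d) z.1 z.2 := by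
      have h0 := hu₀proj (divP d) (divP_memP hd)
      have e : (∫ z in Set.Icc x₀ x₁ ×ˢ Set.Icc y₀ y₁,
          (w z - evalP u₀ z.1 z.2) * evalP (divP d) z.1 z.2)
          = ∫ z in Set.Icc x₀ x₁ ×ˢ Set.Icc y₀ y₁,
            (w z * evalP (divP d) z.1 z.2 - evalP u₀ z.1 z.2 * evalP (divP d) z.1 z.2) :=
        setIntegral_congr_fun Kmeas fun z _ => by ring
      rw [e, integral_sub iw iu] at h0
      linarith
    -- boundary terms
    have B1 : (∫ y in y₀..y₁, ub₁.eval y * (-(evalP d.1 x₀ y)))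
        = ∫ y in y₀..y₁, w (x₀, y) * (-(evalP d.1 x₀ y)) := by
      have hre : ∀ y : ℝ, (-(MvPolynomial.aeval ![Polynomial.C x₀, Polynomial.X] d.1)).eval y
          = -(evalP d.1 x₀ y) := fun y => by rw [Polynomial.eval_neg, eval_aeval_snd]
      have hdeg : (-(MvPolynomial.aeval ![Polynomial.C x₀, Polynomial.X] d.1)).natDegree ≤ j + 1 := by
        rw [Polynomial.natDegree_neg]; exact edge_deg_x j hd x₀
      have hs := edge_swap (hw.continuous.comp (continuous_const.prodMk continuous_id)) ub₁ _
        (hub₁ _ hdeg)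
      calc (∫ y in y₀..y₁, ub₁.eval y * (-(evalP d.1 x₀ y)))
          = ∫ y in y₀..y₁, ub₁.eval y
              * (-(MvPolynomial.aeval ![Polynomial.C x₀, Polynomial.X] d.1)).eval y :=
            intervalIntegral.integral_congr fun y _ => by rw [hre]
        _ = ∫ y in y₀..y₁, w (x₀, y)
              * (-(MvPolynomial.aeval ![Polynomial.C x₀, Polynomial.X] d.1)).eval y := hs
        _ = ∫ y in y₀..y₁, w (x₀, y) * (-(evalP d.1 x₀ y)) :=
            intervalIntegral.integral_congr fun y _ => by rw [hre]
    have B2 : (∫ y in y₀..y₁, ub₂.eval y * evalP d.1 x₁ y)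
        = ∫ y in y₀..y₁, w (x₁, y) * evalP d.1 x₁ y := by
      have hre : ∀ y : ℝ, (MvPolynomial.aeval ![Polynomial.C x₁, Polynomial.X] d.1).eval y
          = evalP d.1 x₁ y := fun y => eval_aeval_snd _ _ _
      have hs := edge_swap (hw.continuous.comp (continuous_const.prodMk continuous_id)) ub₂ _
        (hub₂ _ (edge_deg_x j hd x₁))
      calc (∫ y in y₀..y₁, ub₂.eval y * evalP d.1 x₁ y)
          = ∫ y in y₀..y₁, ub₂.eval y
              * (MvPolynomial.aeval ![Polynomial.C x₁, Polynomial.X] d.1).eval y :=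
            intervalIntegral.integral_congr fun y _ => by rw [hre]
        _ = ∫ y in y₀..y₁, w (x₁, y)
              * (MvPolynomial.aeval ![Polynomial.C x₁, Polynomial.X] d.1).eval y := hs
        _ = ∫ y in y₀..y₁, w (x₁, y) * evalP d.1 x₁ y :=
            intervalIntegral.integral_congr fun y _ => by rw [hre]
    have B3 : (∫ x in x₀..x₁, ub₃.eval x * (-(evalP d.2 x y₀)))
        = ∫ x in x₀..x₁, w (x, y₀) * (-(evalP d.2 x y₀)) := by
      have hre : ∀ x : ℝ, (-(MvPolynomial.aeval ![Polynomial.X, Polynomial.C y₀] d.2)).eval x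
          = -(evalP d.2 x y₀) := fun x => by rw [Polynomial.eval_neg, eval_aeval_fst]
      have hdeg : (-(MvPolynomial.aeval ![Polynomial.X, Polynomial.C y₀] d.2)).natDegree ≤ j + 1 := by
        rw [Polynomial.natDegree_neg]; exact edge_deg_y j hd y₀
      have hs := edge_swap (hw.continuous.comp (continuous_id.prodMk continuous_const)) ub₃ _
        (hub₃ _ hdeg)
      calc (∫ x in x₀..x₁, ub₃.eval x * (-(evalP d.2 x y₀)))
          = ∫ x in x₀..x₁, ub₃.eval x
              * (-(MvPolynomial.aeval ![Polynomial.X, Polynomial.C y₀] d.2)).eval x :=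
            intervalIntegral.integral_congr fun x _ => by rw [hre]
        _ = ∫ x in x₀..x₁, w (x, y₀)
              * (-(MvPolynomial.aeval ![Polynomial.X, Polynomial.C y₀] d.2)).eval x := hs
        _ = ∫ x in x₀..x₁, w (x, y₀) * (-(evalP d.2 x y₀)) :=
            intervalIntegral.integral_congr fun x _ => by rw [hre]
    have B4 : (∫ x in x₀..x₁, ub₄.eval x * evalP d.2 x y₁)
        = ∫ x in x₀..x₁, w (x, y₁) * evalP d.2 x y₁ := by
      have hre : ∀ x : ℝ, (MvPolynomial.aeval ![Polynomial.X, Polynomial.C y₁] d.2).eval x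
          = evalP d.2 x y₁ := fun x => eval_aeval_fst _ _ _
      have hs := edge_swap (hw.continuous.comp (continuous_id.prodMk continuous_const)) ub₄ _
        (hub₄ _ (edge_deg_y j hd y₁))
      calc (∫ x in x₀..x₁, ub₄.eval x * evalP d.2 x y₁)
          = ∫ x in x₀..x₁, ub₄.eval x
              * (MvPolynomial.aeval ![Polynomial.X, Polynomial.C y₁] d.2).eval x :=
            intervalIntegral.integral_congr fun x _ => by rw [hre]
        _ = ∫ x in x₀..x₁, w (x, y₁)
              * (MvPolynomial.aeval ![Polynomial.X, Polynomial.C y₁] d.2).eval x := hs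
        _ = ∫ x in x₀..x₁, w (x, y₁) * evalP d.2 x y₁ :=
            intervalIntegral.integral_congr fun x _ => by rw [hre]
    -- assemble
    have iGq : IntegrableOn (fun z : ℝ × ℝ =>
        evalP G.1 z.1 z.2 * evalP d.1 z.1 z.2 + evalP G.2 z.1 z.2 * evalP d.2 z.1 z.2)
        (Set.Icc x₀ x₁ ×ˢ Set.Icc y₀ y₁) volume :=
      rect_integrableOn (((evalP_cont _).mul (evalP_cont _)).add
        ((evalP_cont _).mul (evalP_cont _)))
    have igq : IntegrableOn (fun z : ℝ × ℝ =>
        fderiv ℝ w z (1, 0) * evalP d.1 z.1 z.2 + fderiv ℝ w z (0, 1) * evalP d.2 z.1 z.2)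
        (Set.Icc x₀ x₁ ×ˢ Set.Icc y₀ y₁) volume :=
      rect_integrableOn (((cont_g1 hw).mul (evalP_cont _)).add
        ((cont_g2 hw).mul (evalP_cont _)))
    have split : (∫ z in Set.Icc x₀ x₁ ×ˢ Set.Icc y₀ y₁,
        ((evalP G.1 z.1 z.2 - fderiv ℝ w z (1, 0)) * evalP d.1 z.1 z.2
          + (evalP G.2 z.1 z.2 - fderiv ℝ w z (0, 1)) * evalP d.2 z.1 z.2))
        = (∫ z in Set.Icc x₀ x₁ ×ˢ Set.Icc y₀ y₁,
            (evalP G.1 z.1 z.2 * evalP d.1 z.1 z.2 + evalP G.2 z.1 z.2 * evalP d.2 z.1 z.2))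
          - ∫ z in Set.Icc x₀ x₁ ×ˢ Set.Icc y₀ y₁,
            (fderiv ℝ w z (1, 0) * evalP d.1 z.1 z.2
              + fderiv ℝ w z (0, 1) * evalP d.2 z.1 z.2) := by
      rw [← integral_sub iGq igq]
      exact setIntegral_congr_fun Kmeas fun z _ => by ring
    rw [split]
    linarith [S1, S2, S3, B1, B2, B3, B4]
  -- best approximation
  intro q hq
  have hd := memBDM_sub hq hG
  have horth := ortho _ hd
  have hB : (∫ z in Set.Icc x₀ x₁ ×ˢ Set.Icc y₀ y₁,
      ((evalP G.1 z.1 z.2 - fderiv ℝ w z (1, 0)) * (evalP q.1 z.1 z.2 - evalP G.1 z.1 z.2)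
        + (evalP G.2 z.1 z.2 - fderiv ℝ w z (0, 1)) * (evalP q.2 z.1 z.2 - evalP G.2 z.1 z.2)))
      = 0 := by
    refine Eq.trans ?_ horth
    exact setIntegral_congr_fun Kmeas fun z _ => by simp [evalP_sub]
  have iA : IntegrableOn (fun z : ℝ × ℝ =>
      (evalP G.1 z.1 z.2 - fderiv ℝ w z (1, 0)) ^ 2
        + (evalP G.2 z.1 z.2 - fderiv ℝ w z (0, 1)) ^ 2)
      (Set.Icc x₀ x₁ ×ˢ Set.Icc y₀ y₁) volume :=
    rect_integrableOn ((((evalP_cont _).sub (cont_g1 hw)).pow 2).add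
      (((evalP_cont _).sub (cont_g2 hw)).pow 2))
  have iB : IntegrableOn (fun z : ℝ × ℝ =>
      2 * ((evalP G.1 z.1 z.2 - fderiv ℝ w z (1, 0)) * (evalP q.1 z.1 z.2 - evalP G.1 z.1 z.2)
        + (evalP G.2 z.1 z.2 - fderiv ℝ w z (0, 1)) * (evalP q.2 z.1 z.2 - evalP G.2 z.1 z.2)))
      (Set.Icc x₀ x₁ ×ˢ Set.Icc y₀ y₁) volume :=
    rect_integrableOn (continuous_const.mul
      ((((evalP_cont _).sub (cont_g1 hw)).mul ((evalP_cont _).sub (evalP_cont _))).add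
        (((evalP_cont _).sub (cont_g2 hw)).mul ((evalP_cont _).sub (evalP_cont _)))))
  have iC : IntegrableOn (fun z : ℝ × ℝ =>
      (evalP q.1 z.1 z.2 - evalP G.1 z.1 z.2) ^ 2
        + (evalP q.2 z.1 z.2 - evalP G.2 z.1 z.2) ^ 2)
      (Set.Icc x₀ x₁ ×ˢ Set.Icc y₀ y₁) volume :=
    rect_integrableOn ((((evalP_cont _).sub (evalP_cont _)).pow 2).add
      (((evalP_cont _).sub (evalP_cont _)).pow 2))
  have hsplit : (∫ z in Set.Icc x₀ x₁ ×ˢ Set.Icc y₀ y₁,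
      ((evalP q.1 z.1 z.2 - fderiv ℝ w z (1, 0)) ^ 2
        + (evalP q.2 z.1 z.2 - fderiv ℝ w z (0, 1)) ^ 2))
      = (∫ z in Set.Icc x₀ x₁ ×ˢ Set.Icc y₀ y₁,
          ((evalP G.1 z.1 z.2 - fderiv ℝ w z (1, 0)) ^ 2
            + (evalP G.2 z.1 z.2 - fderiv ℝ w z (0, 1)) ^ 2))
        + ((∫ z in Set.Icc x₀ x₁ ×ˢ Set.Icc y₀ y₁,
            2 * ((evalP G.1 z.1 z.2 - fderiv ℝ w z (1, 0))
                * (evalP q.1 z.1 z.2 - evalP G.1 z.1 z.2)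
              + (evalP G.2 z.1 z.2 - fderiv ℝ w z (0, 1))
                * (evalP q.2 z.1 z.2 - evalP G.2 z.1 z.2)))
          + ∫ z in Set.Icc x₀ x₁ ×ˢ Set.Icc y₀ y₁,
            ((evalP q.1 z.1 z.2 - evalP G.1 z.1 z.2) ^ 2
              + (evalP q.2 z.1 z.2 - evalP G.2 z.1 z.2) ^ 2)) := by
    have E := integral_add iA (iB.add iC)
    simp only [Pi.add_apply] at E
    have E2 := integral_add iB iC
    calc (∫ z in Set.Icc x₀ x₁ ×ˢ Set.Icc y₀ y₁,
        ((evalP q.1 z.1 z.2 - fderiv ℝ w z (1, 0)) ^ 2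
          + (evalP q.2 z.1 z.2 - fderiv ℝ w z (0, 1)) ^ 2))
        = ∫ z in Set.Icc x₀ x₁ ×ˢ Set.Icc y₀ y₁,
          (((evalP G.1 z.1 z.2 - fderiv ℝ w z (1, 0)) ^ 2
              + (evalP G.2 z.1 z.2 - fderiv ℝ w z (0, 1)) ^ 2)
            + (2 * ((evalP G.1 z.1 z.2 - fderiv ℝ w z (1, 0))
                  * (evalP q.1 z.1 z.2 - evalP G.1 z.1 z.2)
                + (evalP G.2 z.1 z.2 - fderiv ℝ w z (0, 1))
                  * (evalP q.2 z.1 z.2 - evalP G.2 z.1 z.2))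
              + ((evalP q.1 z.1 z.2 - evalP G.1 z.1 z.2) ^ 2
                + (evalP q.2 z.1 z.2 - evalP G.2 z.1 z.2) ^ 2))) :=
          setIntegral_congr_fun Kmeas fun z _ => by ring
      _ = _ := by rw [E, E2]
  have h2B : (∫ z in Set.Icc x₀ x₁ ×ˢ Set.Icc y₀ y₁,
      2 * ((evalP G.1 z.1 z.2 - fderiv ℝ w z (1, 0)) * (evalP q.1 z.1 z.2 - evalP G.1 z.1 z.2)
        + (evalP G.2 z.1 z.2 - fderiv ℝ w z (0, 1))
          * (evalP q.2 z.1 z.2 - evalP G.2 z.1 z.2))) = 0 := by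
    rw [integral_const_mul, hB, mul_zero]
  have hCnn : 0 ≤ ∫ z in Set.Icc x₀ x₁ ×ˢ Set.Icc y₀ y₁,
      ((evalP q.1 z.1 z.2 - evalP G.1 z.1 z.2) ^ 2
        + (evalP q.2 z.1 z.2 - evalP G.2 z.1 z.2) ^ 2) :=
    setIntegral_nonneg Kmeas fun z _ => by positivity
  linarith [hsplit, h2B, hCnn]
end
end

section
/- For i ∈ {1,2,3} define χ_i : ℝ² → ℝ² by χ_i(x) = (|e_i|/(2|K|))(x − v_i). Then for each i ∈ {1,2,3}, with {j,k} = {1,2,3}∖{i}, ∫_K χ_i·χ_i dx = |e_i|²(3(l_j + l_k) − l_i)/(48|K|), and for i ≠ j, with k the remaining index, ∫_K χ_i·χ_j dx = |e_i||e_j|(l_i + l_j − 3 l_k)/(48|K|), where the integrals are taken with respect to two-dimensional Lebesgue measure on the triangle K. -/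
open MeasureTheory
open scoped RealInnerProductSpace

noncomputable section

namespace S9
open Set intervalIntegral

/-! ### Integration over the standard triangle in `ℝ × ℝ` -/

def T2 : Set (ℝ × ℝ) := {p | 0 ≤ p.1 ∧ 0 ≤ p.2 ∧ p.1 + p.2 ≤ 1}

lemma measurableSet_T2 : MeasurableSet T2 := by
  apply MeasurableSet.inter (measurableSet_le measurable_const measurable_fst)
  exact MeasurableSet.inter (measurableSet_le measurable_const measurable_snd)
    (measurableSet_le (measurable_fst.add measurable_snd) measurable_const)

lemma isCompact_T2 : IsCompact T2 := by
  apply Metric.isCompact_of_isClosed_isBounded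
  · exact (isClosed_le continuous_const continuous_fst).inter
      ((isClosed_le continuous_const continuous_snd).inter
        (isClosed_le (continuous_fst.add continuous_snd) continuous_const))
  · apply Bornology.IsBounded.subset (Metric.isBounded_Icc ((0:ℝ),(0:ℝ)) (1,1))
    rintro ⟨x, y⟩ ⟨h1, h2, h3⟩
    simp only [Set.mem_setOf_eq] at h1 h2 h3
    exact ⟨⟨h1, h2⟩, ⟨by simpa using (by linarith : x ≤ 1), by simpa using (by linarith : y ≤ 1)⟩⟩

lemma tri_int (g : ℝ × ℝ → ℝ) (hg : Continuous g) :
    ∫ p in T2, g p = ∫ x in (0:ℝ)..1, ∫ y in (0:ℝ)..(1 - x), g (x, y) := by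
  have hint : IntegrableOn g T2 := hg.continuousOn.integrableOn_compact isCompact_T2
  rw [← MeasureTheory.integral_indicator measurableSet_T2]
  rw [show (volume : Measure (ℝ × ℝ)) = (volume : Measure ℝ).prod volume from rfl]
  rw [MeasureTheory.integral_prod _ ((integrable_indicator_iff measurableSet_T2).2 hint)]
  have key : ∀ x : ℝ, x ∈ Icc (0:ℝ) 1 →
      (∫ y, T2.indicator g (x, y)) = ∫ y in (0:ℝ)..(1 - x), g (x, y) := by
    intro x hx
    have : (fun y => T2.indicator g (x, y)) = (Icc 0 (1 - x)).indicator (fun y => g (x, y)) := by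
      funext y
      by_cases hy : y ∈ Icc (0:ℝ) (1 - x)
      · rw [indicator_of_mem hy, indicator_of_mem]
        exact ⟨hx.1, hy.1, by have := hy.2; linarith⟩
      · rw [indicator_of_notMem hy, indicator_of_notMem]
        intro hmem
        exact hy ⟨hmem.2.1, by have := hmem.2.2; linarith⟩
    rw [this, MeasureTheory.integral_indicator measurableSet_Icc,
      MeasureTheory.integral_Icc_eq_integral_Ioc,
      ← intervalIntegral.integral_of_le (by linarith [hx.2] : (0:ℝ) ≤ 1 - x)]
  have vanish : ∀ x : ℝ, x ∉ Icc (0:ℝ) 1 → (∫ y, T2.indicator g (x, y)) = 0 := by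
    intro x hx
    have : (fun y => T2.indicator g (x, y)) = fun _ => 0 := by
      funext y
      apply indicator_of_notMem
      rintro ⟨h1, h2, h3⟩
      exact hx ⟨h1, by linarith⟩
    rw [this, MeasureTheory.integral_zero]
  rw [← MeasureTheory.setIntegral_eq_integral_of_forall_compl_eq_zero
      (fun x hx => vanish x hx)]
  rw [MeasureTheory.integral_Icc_eq_integral_Ioc,
    ← intervalIntegral.integral_of_le (by norm_num : (0:ℝ) ≤ 1)]
  apply intervalIntegral.integral_congr
  intro x hx
  rw [Set.uIcc_of_le (by norm_num : (0:ℝ) ≤ 1)] at hx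
  exact key x hx

lemma quad_int (α β γ c : ℝ) :
    ∫ y in (0:ℝ)..c, (α + β * y + γ * y ^ 2) = α * c + β * c ^ 2 / 2 + γ * c ^ 3 / 3 := by
  have h1 : IntervalIntegrable (fun y : ℝ => α + β * y) volume 0 c :=
    (continuous_const.add (continuous_const.mul continuous_id)).intervalIntegrable _ _
  have h2 : IntervalIntegrable (fun y : ℝ => γ * y ^ 2) volume 0 c :=
    (continuous_const.mul (continuous_pow 2)).intervalIntegrable _ _
  have h3 : IntervalIntegrable (fun y : ℝ => α) volume 0 c :=
    continuous_const.intervalIntegrable _ _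
  have h4 : IntervalIntegrable (fun y : ℝ => β * y) volume 0 c :=
    (continuous_const.mul continuous_id).intervalIntegrable _ _
  rw [intervalIntegral.integral_add h1 h2, intervalIntegral.integral_add h3 h4]
  rw [intervalIntegral.integral_const_mul, intervalIntegral.integral_const_mul,
    integral_id, integral_pow, intervalIntegral.integral_const]
  simp only [smul_eq_mul]
  ring

lemma cubic_int (a b c d : ℝ) :
    ∫ x in (0:ℝ)..1, (a + b * x + c * x ^ 2 + d * x ^ 3) = a + b / 2 + c / 3 + d / 4 := by
  have h1 : IntervalIntegrable (fun y : ℝ => a + b * y + c * y ^ 2) volume 0 1 :=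
    ((continuous_const.add (continuous_const.mul continuous_id)).add
      (continuous_const.mul (continuous_pow 2))).intervalIntegrable _ _
  have h2 : IntervalIntegrable (fun y : ℝ => d * y ^ 3) volume 0 1 :=
    (continuous_const.mul (continuous_pow 3)).intervalIntegrable _ _
  rw [intervalIntegral.integral_add h1 h2, quad_int,
    intervalIntegral.integral_const_mul, integral_pow]
  push_cast
  ring

lemma tri_poly (k0 k1 k2 k3 k4 k5 : ℝ) :
    (∫ p in T2, (k0 + k1 * p.1 + k2 * p.2 + k3 * p.1 ^ 2 + k4 * p.2 ^ 2 + k5 * (p.1 * p.2)))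
      = k0 / 2 + (k1 + k2) / 6 + (k3 + k4) / 12 + k5 / 24 := by
  rw [tri_int _ (by fun_prop)]
  have inner : ∀ x : ℝ,
      (∫ y in (0:ℝ)..(1 - x), (k0 + k1 * x + k2 * y + k3 * x ^ 2 + k4 * y ^ 2 + k5 * (x * y)))
      = (k0 + k1 * x + k3 * x ^ 2) * (1 - x) + (k2 + k5 * x) * (1 - x) ^ 2 / 2
        + k4 * (1 - x) ^ 3 / 3 := by
    intro x
    rw [show (∫ y in (0:ℝ)..(1 - x), (k0 + k1 * x + k2 * y + k3 * x ^ 2 + k4 * y ^ 2 + k5 * (x * y)))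
        = ∫ y in (0:ℝ)..(1 - x), ((k0 + k1 * x + k3 * x ^ 2) + (k2 + k5 * x) * y + k4 * y ^ 2)
      from intervalIntegral.integral_congr (fun y _ => by ring)]
    rw [quad_int]
  simp only [inner]
  rw [show (∫ x in (0:ℝ)..1, ((k0 + k1 * x + k3 * x ^ 2) * (1 - x) + (k2 + k5 * x) * (1 - x) ^ 2 / 2
        + k4 * (1 - x) ^ 3 / 3))
      = ∫ x in (0:ℝ)..1, ((k0 + k2 / 2 + k4 / 3) + (k1 - k0 + k5 / 2 - k2 - k4) * x
        + (k3 - k1 + k2 / 2 - k5 + k4) * x ^ 2 + (-k3 + k5 / 2 - k4 / 3) * x ^ 3)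
      from intervalIntegral.integral_congr (fun x _ => by ring)]
  rw [cubic_int]
  ring

/-! ### Transfer to `EuclideanSpace ℝ (Fin 2)` -/

abbrev E2 := EuclideanSpace ℝ (Fin 2)

def ψ : E2 ≃ᵐ ℝ × ℝ :=
  (MeasurableEquiv.toLp 2 (Fin 2 → ℝ)).symm.trans (MeasurableEquiv.piFinTwo fun _ => ℝ)

lemma ψ_apply (u : E2) : ψ u = (u 0, u 1) := rfl

lemma ψ_mp : MeasurePreserving ψ volume volume :=
  (volume_preserving_piFinTwo fun _ => ℝ).comp
    (EuclideanSpace.volume_preserving_symm_measurableEquiv_toLp (Fin 2))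

def Δ : Set E2 := ψ ⁻¹' T2

lemma mem_Δ {u : E2} : u ∈ Δ ↔ 0 ≤ u 0 ∧ 0 ≤ u 1 ∧ u 0 + u 1 ≤ 1 := Iff.rfl

lemma measurableSet_Δ : MeasurableSet Δ := measurableSet_T2.preimage ψ.measurable

lemma transfer (g : ℝ × ℝ → ℝ) : (∫ u in Δ, g (ψ u)) = ∫ p in T2, g p :=
  ψ_mp.setIntegral_preimage_emb ψ.measurableEmbedding g T2

lemma tri_poly_Δ (k0 k1 k2 k3 k4 k5 : ℝ) :
    (∫ u in Δ, (k0 + k1 * u 0 + k2 * u 1 + k3 * u 0 ^ 2 + k4 * u 1 ^ 2 + k5 * (u 0 * u 1)))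
      = k0 / 2 + (k1 + k2) / 6 + (k3 + k4) / 12 + k5 / 24 := by
  rw [← tri_poly k0 k1 k2 k3 k4 k5]
  exact transfer (fun p : ℝ × ℝ =>
    k0 + k1 * p.1 + k2 * p.2 + k3 * p.1 ^ 2 + k4 * p.2 ^ 2 + k5 * (p.1 * p.2))

lemma volume_Δ : volume Δ = ENNReal.ofReal (1 / 2) := by
  rw [Δ, ψ_mp.measure_preimage measurableSet_T2.nullMeasurableSet]
  have h := tri_poly 1 0 0 0 0 0
  norm_num at h
  rw [← h, measureReal_def, ENNReal.ofReal_toReal isCompact_T2.measure_lt_top.ne]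

/-! ### The affine parametrization of the triangle -/

def Amap (w1 w2 : E2) : E2 →ₗ[ℝ] E2 where
  toFun u := u 0 • w1 + u 1 • w2
  map_add' u v := by
    simp only [PiLp.add_apply, add_smul]
    abel
  map_smul' c u := by
    simp only [PiLp.smul_apply, smul_eq_mul, mul_smul, RingHom.id_apply, smul_add]

lemma Amap_apply (w1 w2 u : E2) : Amap w1 w2 u = u 0 • w1 + u 1 • w2 := rfl

def b0 : E2 := EuclideanSpace.single 0 1
def b1 : E2 := EuclideanSpace.single 1 1

lemma Δ_eq_hull : Δ = convexHull ℝ {(0:E2), b0, b1} := by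
  apply le_antisymm
  · intro u hu
    rw [mem_Δ] at hu
    have hcm : (Finset.univ : Finset (Fin 3)).centerMass ![1 - u 0 - u 1, u 0, u 1] ![0, b0, b1]
        ∈ convexHull ℝ ({(0:E2), b0, b1} : Set E2) :=
      Finset.centerMass_mem_convexHull _
        (by intro i _; fin_cases i <;> simp <;> linarith [hu.1, hu.2.1, hu.2.2])
        (by simp [Fin.sum_univ_three]; linarith)
        (by intro i _; fin_cases i <;> simp [Set.mem_insert_iff])
    have hsum : ∑ i : Fin 3, (![1 - u 0 - u 1, u 0, u 1]) i = 1 := by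
      simp [Fin.sum_univ_three]; ring
    rw [Finset.centerMass_eq_of_sum_1 _ _ hsum] at hcm
    convert hcm using 1
    refine (PiLp.ext fun c => ?_).symm
    fin_cases c <;>
      simp [Fin.sum_univ_three, b0, b1, EuclideanSpace.single_apply, PiLp.add_apply,
        PiLp.smul_apply]
  · apply convexHull_min
    · rintro x (rfl | rfl | rfl) <;>
        simp [mem_Δ, b0, b1, EuclideanSpace.single_apply]
    · intro x hx y hy a b ha hb hab
      rw [mem_Δ] at hx hy ⊢
      simp only [PiLp.add_apply, PiLp.smul_apply, smul_eq_mul]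
      refine ⟨add_nonneg (mul_nonneg ha hx.1) (mul_nonneg hb hy.1),
        add_nonneg (mul_nonneg ha hx.2.1) (mul_nonneg hb hy.2.1), ?_⟩
      nlinarith [hx.1, hx.2.1, hx.2.2, hy.1, hy.2.1, hy.2.2]

def Tmap (p w1 w2 : E2) : E2 →ᵃ[ℝ] E2 where
  toFun u := p + Amap w1 w2 u
  linear := Amap w1 w2
  map_vadd' pt vct := by
    simp only [vadd_eq_add, map_add]
    abel

lemma Tmap_apply (p w1 w2 u : E2) : Tmap p w1 w2 u = p + Amap w1 w2 u := rfl

end S9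

open S9 in
set_option maxHeartbeats 1000000 in
/-- Entries of the Gram (mass) matrix of the lowest-order Raviart–Thomas
basis `χ_i(x) = (|e_i|/(2|K|)) (x − v_i)` on a nondegenerate triangle `K`:
`∫_K χ_i·χ_i = |e_i|²(3(l_j + l_k) − l_i)/(48|K|)` and, for `i ≠ j`,
`∫_K χ_i·χ_j = |e_i||e_j|(l_i + l_j − 3 l_k)/(48|K|)`, where `l_i = |e_i|²`. -/
theorem statement9 (v : Fin 3 → EuclideanSpace ℝ (Fin 2))
    (hv : AffineIndependent ℝ v)
    (K : Set (EuclideanSpace ℝ (Fin 2))) (hK : K = convexHull ℝ (Set.range v))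
    (areaK : ℝ) (hArea : areaK = (volume K).toReal) (hpos : 0 < areaK)
    (ℓ : Fin 3 → ℝ) (hℓ : ∀ i, ℓ i = dist (v (i + 1)) (v (i + 2)))
    (l : Fin 3 → ℝ) (hl : ∀ i, l i = ℓ i ^ 2)
    (χ : Fin 3 → EuclideanSpace ℝ (Fin 2) → EuclideanSpace ℝ (Fin 2))
    (hχ : ∀ i x, χ i x = (ℓ i / (2 * areaK)) • (x - v i)) :
    (∀ i, (∫ x in K, ⟪χ i x, χ i x⟫)
      = ℓ i ^ 2 * (3 * (l (i + 1) + l (i + 2)) - l i) / (48 * areaK)) ∧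
    (∀ i j, i ≠ j → (∫ x in K, ⟪χ i x, χ j x⟫)
      = ℓ i * ℓ j * (l i + l j - 3 * l (-(i + j))) / (48 * areaK)) := by
  classical
  set w1 : E2 := v 1 - v 0 with hw1
  set w2 : E2 := v 2 - v 0 with hw2
  set A : E2 →ₗ[ℝ] E2 := Amap w1 w2 with hA
  set T : E2 →ᵃ[ℝ] E2 := Tmap (v 0) w1 w2 with hT
  -- K is the image of the reference triangle
  have himg : T '' {(0:E2), b0, b1} = {v 0, v 1, v 2} := by
    rw [Set.image_insert_eq, Set.image_insert_eq, Set.image_singleton]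
    have h0 : T 0 = v 0 := by
      simp [hT, Tmap_apply, Amap_apply]
    have hb0 : T b0 = v 1 := by
      simp [hT, Tmap_apply, Amap_apply, b0, EuclideanSpace.single_apply, hw1, hw2]
    have hb1 : T b1 = v 2 := by
      simp [hT, Tmap_apply, Amap_apply, b1, EuclideanSpace.single_apply, hw1, hw2]
    rw [h0, hb0, hb1]
  have hrange : Set.range v = {v 0, v 1, v 2} := by
    ext x
    constructor
    · rintro ⟨i, rfl⟩; fin_cases i <;> simp
    · rintro (rfl | rfl | rfl) <;> exact ⟨_, rfl⟩
  have hK2 : K = T '' Δ := by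
    rw [hK, hrange, ← himg, Δ_eq_hull, AffineMap.image_convexHull]
  have hKcompact : IsCompact K := by
    rw [hK]
    exact (Set.finite_range v).isCompact_convexHull ℝ
  have hKmeas : MeasurableSet K := hKcompact.isClosed.measurableSet
  -- volume of K and the determinant
  have hvolK : volume K = ENNReal.ofReal |LinearMap.det A| * ENNReal.ofReal (1/2) := by
    rw [hK2]
    have h0 : (T : E2 → E2) '' Δ = (fun y => v 0 + y) '' (A '' Δ) := by
      rw [← Set.image_comp]; rfl
    have h1 : (fun y : E2 => v 0 + y) '' (⇑A '' Δ) = (fun y => -v 0 + y) ⁻¹' (⇑A '' Δ) :=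
      Set.image_add_left
    rw [h0, h1, measure_preimage_add, Measure.addHaar_image_linearMap, volume_Δ]
  have hdetval : |LinearMap.det A| = 2 * areaK := by
    have : areaK = |LinearMap.det A| * (1/2) := by
      rw [hArea, hvolK, ENNReal.toReal_mul, ENNReal.toReal_ofReal (abs_nonneg _),
        ENNReal.toReal_ofReal (by norm_num)]
    rw [this]; ring
  have hdet0 : LinearMap.det A ≠ 0 := by
    intro h
    rw [h, abs_zero] at hdetval
    linarith
  have hAinj : Function.Injective A := by
    intro x y h
    apply (A.equivOfDetNeZero hdet0).injective
    simpa [LinearEquiv.ofIsUnitDet_apply] using h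
  have hTinj : Set.InjOn T Δ := by
    intro x _ y _ h
    apply hAinj
    have : v 0 + A x = v 0 + A y := h
    exact add_left_cancel this
  -- change of variables
  have hCOV : ∀ g : E2 → ℝ,
      (∫ x in K, g x) = ∫ u in Δ, |LinearMap.det A| * g (T u) := by
    intro g
    rw [hK2]
    have hder : ∀ x ∈ Δ, HasFDerivWithinAt (T : E2 → E2)
        (LinearMap.toContinuousLinearMap A) Δ x := by
      intro x _
      have : HasFDerivAt (fun u : E2 => v 0 + A u)
          (LinearMap.toContinuousLinearMap A) x :=
        ((LinearMap.toContinuousLinearMap A).hasFDerivAt).const_add (v 0)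
      exact this.hasFDerivWithinAt
    have hcv := MeasureTheory.integral_image_eq_integral_abs_det_fderiv_smul volume
      measurableSet_Δ hder hTinj g
    rw [hcv]
    apply setIntegral_congr_fun measurableSet_Δ
    intro u _
    simp [ContinuousLinearMap.det, smul_eq_mul]
  -- the master integral formula
  have hMono : ∀ p q : E2, (∫ x in K, ⟪x - p, x - q⟫) =
      2 * areaK * (⟪v 0 - p, v 0 - q⟫ / 2
        + (⟪v 0 - p, w1⟫ + ⟪w1, v 0 - q⟫ + ⟪v 0 - p, w2⟫ + ⟪w2, v 0 - q⟫) / 6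
        + (⟪w1, w1⟫ + ⟪w2, w2⟫) / 12 + (⟪w1, w2⟫ + ⟪w2, w1⟫) / 24) := by
    intro p q
    rw [hCOV (fun x => ⟪x - p, x - q⟫)]
    have hpt : ∀ u : E2, ⟪T u - p, T u - q⟫ =
        ⟪v 0 - p, v 0 - q⟫
          + (⟪v 0 - p, w1⟫ + ⟪w1, v 0 - q⟫) * u 0
          + (⟪v 0 - p, w2⟫ + ⟪w2, v 0 - q⟫) * u 1
          + ⟪w1, w1⟫ * u 0 ^ 2 + ⟪w2, w2⟫ * u 1 ^ 2
          + (⟪w1, w2⟫ + ⟪w2, w1⟫) * (u 0 * u 1) := by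
      intro u
      have h1 : T u - p = (v 0 - p) + (u 0 • w1 + u 1 • w2) := by
        rw [show T u = v 0 + (u 0 • w1 + u 1 • w2) from rfl]
        abel
      have h2 : T u - q = (v 0 - q) + (u 0 • w1 + u 1 • w2) := by
        rw [show T u = v 0 + (u 0 • w1 + u 1 • w2) from rfl]
        abel
      rw [h1, h2]
      simp only [inner_add_left, inner_add_right, real_inner_smul_left, real_inner_smul_right]
      ring
    rw [show (∫ u in Δ, |LinearMap.det A| * ⟪T u - p, T u - q⟫)
        = ∫ u in Δ, |LinearMap.det A| *
          (⟪v 0 - p, v 0 - q⟫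
            + (⟪v 0 - p, w1⟫ + ⟪w1, v 0 - q⟫) * u 0
            + (⟪v 0 - p, w2⟫ + ⟪w2, v 0 - q⟫) * u 1
            + ⟪w1, w1⟫ * u 0 ^ 2 + ⟪w2, w2⟫ * u 1 ^ 2
            + (⟪w1, w2⟫ + ⟪w2, w1⟫) * (u 0 * u 1))
      from setIntegral_congr_fun measurableSet_Δ (fun u _ => by rw [hpt u])]
    rw [MeasureTheory.integral_const_mul,
      tri_poly_Δ ⟪v 0 - p, v 0 - q⟫ (⟪v 0 - p, w1⟫ + ⟪w1, v 0 - q⟫)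
        (⟪v 0 - p, w2⟫ + ⟪w2, v 0 - q⟫) ⟪w1, w1⟫ ⟪w2, w2⟫ (⟪w1, w2⟫ + ⟪w2, w1⟫),
      hdetval]
    ring
  -- squared lengths as inner products
  have hl0 : l 0 = ⟪v 1 - v 2, v 1 - v 2⟫ := by
    rw [hl, hℓ, show ((0:Fin 3) + 1) = 1 by decide, show ((0:Fin 3) + 2) = 2 by decide,
      dist_eq_norm]
    exact (real_inner_self_eq_norm_sq _).symm
  have hl1 : l 1 = ⟪v 2 - v 0, v 2 - v 0⟫ := by
    rw [hl, hℓ, show ((1:Fin 3) + 1) = 2 by decide, show ((1:Fin 3) + 2) = 0 by decide,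
      dist_eq_norm]
    exact (real_inner_self_eq_norm_sq _).symm
  have hl2 : l 2 = ⟪v 0 - v 1, v 0 - v 1⟫ := by
    rw [hl, hℓ, show ((2:Fin 3) + 1) = 0 by decide, show ((2:Fin 3) + 2) = 1 by decide,
      dist_eq_norm]
    exact (real_inner_self_eq_norm_sq _).symm
  have hA0 : areaK ≠ 0 := ne_of_gt hpos
  -- general reduction of the χ-integral
  have hred : ∀ i j : Fin 3, (∫ x in K, ⟪χ i x, χ j x⟫)
      = (ℓ i / (2 * areaK)) * ((ℓ j / (2 * areaK)) * (∫ x in K, ⟪x - v i, x - v j⟫)) := by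
    intro i j
    rw [show (∫ x in K, ⟪χ i x, χ j x⟫)
        = ∫ x in K, (ℓ i / (2 * areaK)) * ((ℓ j / (2 * areaK)) * ⟪x - v i, x - v j⟫)
      from setIntegral_congr_fun hKmeas (fun x _ => by
        rw [hχ, hχ, real_inner_smul_left, real_inner_smul_right])]
    rw [MeasureTheory.integral_const_mul, MeasureTheory.integral_const_mul]
  constructor
  · intro i
    rw [hred i i, hMono (v i) (v i)]
    have hi3 : i = 0 ∨ i = 1 ∨ i = 2 := by fin_cases i <;> decide
    rcases hi3 with rfl | rfl | rfl
    · rw [show ((0:Fin 3) + 1) = 1 by decide, show ((0:Fin 3) + 2) = 2 by decide,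
        hl0, hl1, hl2, hw1, hw2]
      field_simp
      simp only [inner_sub_left, inner_sub_right, real_inner_comm]
      ring
    · rw [show ((1:Fin 3) + 1) = 2 by decide, show ((1:Fin 3) + 2) = 0 by decide,
        hl0, hl1, hl2, hw1, hw2]
      field_simp
      simp only [inner_sub_left, inner_sub_right, real_inner_comm]
      ring
    · rw [show ((2:Fin 3) + 1) = 0 by decide, show ((2:Fin 3) + 2) = 1 by decide,
        hl0, hl1, hl2, hw1, hw2]
      field_simp
      simp only [inner_sub_left, inner_sub_right, real_inner_comm]
      ring
  · intro i j hij
    rw [hred i j, hMono (v i) (v j)]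
    have hi3 : i = 0 ∨ i = 1 ∨ i = 2 := by fin_cases i <;> decide
    have hj3 : j = 0 ∨ j = 1 ∨ j = 2 := by fin_cases j <;> decide
    rcases hi3 with rfl | rfl | rfl <;> rcases hj3 with rfl | rfl | rfl <;>
      first
      | exact absurd rfl hij
      | (simp only [show (-((0:Fin 3)+1)) = 2 by decide, show (-((0:Fin 3)+2)) = 1 by decide,
          show (-((1:Fin 3)+0)) = 2 by decide, show (-((1:Fin 3)+2)) = 0 by decide,
          show (-((2:Fin 3)+0)) = 1 by decide, show (-((2:Fin 3)+1)) = 0 by decide,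
          hl0, hl1, hl2, hw1, hw2]
         field_simp
         simp only [inner_sub_left, inner_sub_right, real_inner_comm]
         ring)

end
end

section
/- Let e₁, e₂, e₃ > 0 and A > 0 be real numbers with l_i := e_i² satisfying 16A² = 2(l₁l₂ + l₂l₃ + l₃l₁) − l₁² − l₂² − l₃², and set L := l₁ + l₂ + l₃. Define the 3×3 real matrix D by D_{ii} = e_i²(3(l_j + l_k) − l_i)/(48A) (with {j,k} = {1,2,3}∖{i}) and D_{ij} = e_i e_j (l_i + l_j − 3 l_k)/(48A) for i ≠ j (with k the remaining index); let Z be the column vector (e₁, e₂, e₃)ᵗ and T := diag(e₁, e₂, e₃). Then D is invertible and: (1) Zᵗ D⁻¹ Z = 144A/L; (2) Zᵗ D⁻¹ T = (48A/L)(1, 1, 1); (3) Tᵗ D⁻¹ T = (16A/L) J + (1/(2A)) S, where J is the all-ones 3×3 matrix and S := [[2l₁, l₃−l₁−l₂, l₂−l₁−l₃], [l₃−l₁−l₂, 2l₂, l₁−l₂−l₃], [l₂−l₁−l₃, l₁−l₂−l₃, 2l₃]]. -/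
open Matrix

noncomputable section

set_option maxHeartbeats 4000000 in
/-- For side lengths `e₁, e₂, e₃` of a triangle of area `A` (with
`l_i = e_i²` satisfying Heron's relation) and `L = l₁ + l₂ + l₃`, the Raviart–Thomas mass
matrix `D` is invertible and the weak Galerkin local stiffness blocks for the Poisson
equation are: `Zᵗ D⁻¹ Z = 144A/L`, `Zᵗ D⁻¹ T = (48A/L)(1,1,1)`, and
`Tᵗ D⁻¹ T = (16A/L) J + (1/(2A)) S`. -/
theorem statement11 (e₁ e₂ e₃ A : ℝ) (he₁ : 0 < e₁) (he₂ : 0 < e₂) (he₃ : 0 < e₃)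
    (hA : 0 < A)
    (l₁ l₂ l₃ : ℝ) (hl₁ : l₁ = e₁ ^ 2) (hl₂ : l₂ = e₂ ^ 2) (hl₃ : l₃ = e₃ ^ 2)
    (heron : 16 * A ^ 2 = 2 * (l₁ * l₂ + l₂ * l₃ + l₃ * l₁) - l₁ ^ 2 - l₂ ^ 2 - l₃ ^ 2)
    (L : ℝ) (hL : L = l₁ + l₂ + l₃)
    (D : Matrix (Fin 3) (Fin 3) ℝ)
    (hD : D = (1 / (48 * A)) •
      !![e₁ ^ 2 * (3 * (l₂ + l₃) - l₁), e₁ * e₂ * (l₁ + l₂ - 3 * l₃), e₁ * e₃ * (l₁ + l₃ - 3 * l₂);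
         e₁ * e₂ * (l₁ + l₂ - 3 * l₃), e₂ ^ 2 * (3 * (l₁ + l₃) - l₂), e₂ * e₃ * (l₂ + l₃ - 3 * l₁);
         e₁ * e₃ * (l₁ + l₃ - 3 * l₂), e₂ * e₃ * (l₂ + l₃ - 3 * l₁), e₃ ^ 2 * (3 * (l₁ + l₂) - l₃)])
    (Z : Matrix (Fin 3) (Fin 1) ℝ) (hZ : Z = !![e₁; e₂; e₃])
    (T : Matrix (Fin 3) (Fin 3) ℝ) (hT : T = Matrix.diagonal ![e₁, e₂, e₃]) :
    IsUnit D.det ∧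
    Zᵀ * D⁻¹ * Z = !![144 * A / L] ∧
    Zᵀ * D⁻¹ * T = (48 * A / L) • !![1, 1, 1] ∧
    Tᵀ * D⁻¹ * T = (16 * A / L) • !![1, 1, 1; 1, 1, 1; 1, 1, 1]
      + (1 / (2 * A)) • !![2 * l₁, l₃ - l₁ - l₂, l₂ - l₁ - l₃;
          l₃ - l₁ - l₂, 2 * l₂, l₁ - l₂ - l₃;
          l₂ - l₁ - l₃, l₁ - l₂ - l₃, 2 * l₃] := by
  subst hl₁ hl₂ hl₃
  have hA' : A ≠ 0 := ne_of_gt hA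
  have h1 : e₁ ≠ 0 := ne_of_gt he₁
  have h2 : e₂ ≠ 0 := ne_of_gt he₂
  have h3 : e₃ ≠ 0 := ne_of_gt he₃
  have hL0 : L ≠ 0 := by rw [hL]; positivity
  have hDB : D * (!![(16*A/L + 2*e₁^2/(2*A))/(e₁*e₁), (16*A/L + (e₃^2-e₁^2-e₂^2)/(2*A))/(e₁*e₂), (16*A/L + (e₂^2-e₁^2-e₃^2)/(2*A))/(e₁*e₃);
       (16*A/L + (e₃^2-e₁^2-e₂^2)/(2*A))/(e₁*e₂), (16*A/L + 2*e₂^2/(2*A))/(e₂*e₂), (16*A/L + (e₁^2-e₂^2-e₃^2)/(2*A))/(e₂*e₃);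
       (16*A/L + (e₂^2-e₁^2-e₃^2)/(2*A))/(e₁*e₃), (16*A/L + (e₁^2-e₂^2-e₃^2)/(2*A))/(e₂*e₃), (16*A/L + 2*e₃^2/(2*A))/(e₃*e₃)] : Matrix (Fin 3) (Fin 3) ℝ) = 1 := by
    rw [hD]
    ext i j
    fin_cases i <;> fin_cases j <;>
      (simp [Matrix.mul_apply, Fin.sum_univ_three, Matrix.one_fin_three]
       try rw [hL]
       try field_simp) <;>
      first
        | linear_combination (-4*9216*A^4*(e₁^2+e₂^2+e₃^2)^3*e₁*e₂*e₃*e₁*e₁^2) * heron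
        | linear_combination (2*9216*A^4*(e₁^2+e₂^2+e₃^2)^3*e₁*e₂*e₃*e₁*e₂^2) * heron
        | linear_combination (2*9216*A^4*(e₁^2+e₂^2+e₃^2)^3*e₁*e₂*e₃*e₁*e₃^2) * heron
        | linear_combination (2*9216*A^4*(e₁^2+e₂^2+e₃^2)^3*e₁*e₂*e₃*e₂*e₁^2) * heron
        | linear_combination (-4*9216*A^4*(e₁^2+e₂^2+e₃^2)^3*e₁*e₂*e₃*e₂*e₂^2) * heron
        | linear_combination (2*9216*A^4*(e₁^2+e₂^2+e₃^2)^3*e₁*e₂*e₃*e₂*e₃^2) * heron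
        | linear_combination (2*9216*A^4*(e₁^2+e₂^2+e₃^2)^3*e₁*e₂*e₃*e₃*e₁^2) * heron
        | linear_combination (2*9216*A^4*(e₁^2+e₂^2+e₃^2)^3*e₁*e₂*e₃*e₃*e₂^2) * heron
        | linear_combination (-4*9216*A^4*(e₁^2+e₂^2+e₃^2)^3*e₁*e₂*e₃*e₃*e₃^2) * heron
        | (rw [show A ^ 2 = (2 * (e₁ ^ 2 * e₂ ^ 2 + e₂ ^ 2 * e₃ ^ 2 + e₃ ^ 2 * e₁ ^ 2) - (e₁ ^ 2) ^ 2 - (e₂ ^ 2) ^ 2 - (e₃ ^ 2) ^ 2) / 16 by linarith]; ring)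
        | simp [Matrix.vecHead, Matrix.vecTail]
  have hdet : IsUnit D.det := Matrix.isUnit_det_of_right_inverse hDB
  have hinv := inv_eq_right_inv hDB
  have hT' : T = !![e₁,0,0;0,e₂,0;0,0,e₃] := by
    rw [hT]; ext i j; fin_cases i <;> fin_cases j <;>
      first | rfl | simp [Matrix.diagonal_apply, Fin.ext_iff] | (simp [Matrix.diagonal_apply, Fin.ext_iff]; rfl)
  refine ⟨hdet, ?_, ?_, ?_⟩
  · rw [hinv, hZ]
    ext i j
    fin_cases i <;> fin_cases j <;>
      (simp [Matrix.mul_apply, Fin.sum_univ_three, Matrix.transpose_apply,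
         Matrix.vecHead, Matrix.vecTail]
       field_simp
       ring)
  · rw [hinv, hZ, hT']
    ext i j
    fin_cases i <;> fin_cases j <;>
      (simp [Matrix.mul_apply, Fin.sum_univ_three, Matrix.transpose_apply,
         Matrix.vecHead, Matrix.vecTail]
       field_simp
       ring)
  · rw [hinv, hT']
    ext i j
    fin_cases i <;> fin_cases j <;>
      (simp [Matrix.mul_apply, Fin.sum_univ_three, Matrix.transpose_apply,
         Matrix.vecHead, Matrix.vecTail]
       field_simp
       try ring)
end
end
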